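/- Let α ∈ [0,1] and let μ⃗ = (μ₁,μ₂,μ₃) ∈ M_α. Then for every h ∈ C²(ℂ), E(μ⃗^t) = E(μ⃗) + t·Re D_h(μ⃗) + O(t²) as t → 0 through real values; that is, there exist constants C > 0 and δ > 0 such that |E(μ⃗^t) − E(μ⃗) − t·Re D_h(μ⃗)| ≤ C t² for all real t with |t| < δ. -/

import Mathlib

open MeasureTheory Complex Polynomial

noncomputable section

/-- The (topological) support of a measure on `ℂ`: the set of points all of whose open
neighborhoods have positive measure. -/
def msupport (μ : Measure ℂ) : Set ℂ :=
  {x : ℂ | ∀ U : Set ℂ, IsOpen U → x ∈ U → μ U ≠ 0}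

/-- The interaction matrix `A`. -/
def interA : Fin 3 → Fin 3 → ℝ :=
  ![![1, 1/2, 1/2], ![1/2, 1, -1/2], ![1/2, -1/2, 1]]

/-- The logarithmic energy `I(μ,ν) = ∬ log(1/|x-y|) dμ(x) dν(y)`. -/
def logEnergy (μ ν : Measure ℂ) : ℝ :=
  ∫ x, ∫ y, Real.log (1 / ‖x - y‖) ∂ν ∂μ

/-- The total energy functional `E(μ⃗)` with external fields `φ_j = Re Φ_j`. -/
def energyE (Φ : Fin 3 → Polynomial ℂ) (μ : Fin 3 → Measure ℂ) : ℝ :=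
  (∑ j, ∑ k, interA j k * logEnergy (μ j) (μ k)) +
    ∑ j, ∫ x, ((Φ j).eval x).re ∂(μ j)

/-- Membership in the class `M_α`: finite positive Borel measures with compact supports of zero
planar Lebesgue measure, finite energy (stated as integrability of all the energy integrands),
finite pairwise intersections of supports, and the prescribed total masses. -/
structure InClassM (α : ℝ) (Φ : Fin 3 → Polynomial ℂ) (μ : Fin 3 → Measure ℂ) : Prop where
  finite : ∀ j, IsFiniteMeasure (μ j)
  compactSupp : ∀ j, IsCompact (msupport (μ j))
  lebesgueNull : ∀ j, volume (msupport (μ j)) = 0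
  energyInt : ∀ j k, Integrable (fun p : ℂ × ℂ => Real.log (1 / ‖p.1 - p.2‖)) ((μ j).prod (μ k))
  fieldInt : ∀ j, Integrable (fun x => ((Φ j).eval x).re) (μ j)
  interFinite : Set.Finite ((msupport (μ 0) ∩ msupport (μ 1)) ∪
      (msupport (μ 0) ∩ msupport (μ 2)) ∪ (msupport (μ 1) ∩ msupport (μ 2)))
  mass01 : (μ 0 Set.univ).toReal + (μ 1 Set.univ).toReal = 1
  mass02 : (μ 0 Set.univ).toReal + (μ 2 Set.univ).toReal = α
  mass12 : (μ 1 Set.univ).toReal - (μ 2 Set.univ).toReal = 1 - α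

/-- The quantity `D_h(μ⃗)`. -/
def Dvar (Φ : Fin 3 → Polynomial ℂ) (μ : Fin 3 → Measure ℂ) (h : ℂ → ℂ) : ℂ :=
  -(∑ j, ∑ k, (interA j k : ℂ) * ∫ x, ∫ y, (h x - h y) / (x - y) ∂(μ k) ∂(μ j)) +
    ∑ j, ∫ x, (Polynomial.derivative (Φ j)).eval x * h x ∂(μ j)

/-- The pushforward `μ^t` of `μ` under the variation `z ↦ z + t h(z)`. -/
def pushMeas (h : ℂ → ℂ) (t : ℝ) (μ : Measure ℂ) : Measure ℂ :=
  Measure.map (fun z => z + (t : ℂ) * h z) μ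

/-- `μ⃗` is an `α`-critical measure: for every `h ∈ C²(ℂ)`,
`(E(μ⃗^t) - E(μ⃗))/t → 0` as `t → 0`. -/
def IsCriticalMeasure (Φ : Fin 3 → Polynomial ℂ) (μ : Fin 3 → Measure ℂ) : Prop :=
  ∀ h : ℂ → ℂ, ContDiff ℝ 2 h →
    Filter.Tendsto
      (fun t : ℝ => (energyE Φ (fun j => pushMeas h t (μ j)) - energyE Φ μ) / t)
      (nhdsWithin 0 {(0 : ℝ)}ᶜ) (nhds 0)

/-- The Cauchy transform `C^μ(z) = ∫ dμ(x)/(x - z)`. -/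
def cauchyT (μ : Measure ℂ) (z : ℂ) : ℂ := ∫ x, (x - z)⁻¹ ∂μ

/-- The functions `ξ₁, ξ₂, ξ₃` (0-indexed). -/
def xiF (Φ : Fin 3 → Polynomial ℂ) (μ : Fin 3 → Measure ℂ) : Fin 3 → ℂ → ℂ :=
  ![fun z => ((Polynomial.derivative (Φ 0)).eval z + (Polynomial.derivative (Φ 1)).eval z) / 3
      + cauchyT (μ 0) z + cauchyT (μ 1) z,
    fun z => -((Polynomial.derivative (Φ 0)).eval z + (Polynomial.derivative (Φ 2)).eval z) / 3
      - cauchyT (μ 0) z - cauchyT (μ 2) z,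
    fun z => -(Polynomial.derivative (Φ 1)).eval z / 3 + (Polynomial.derivative (Φ 2)).eval z / 3
      - cauchyT (μ 1) z + cauchyT (μ 2) z]

/-- The function `R(z)`. -/
def Rpol (Φ : Fin 3 → Polynomial ℂ) (μ : Fin 3 → Measure ℂ) (z : ℂ) : ℂ :=
  (1/9) * ∑ j, ∑ k, (interA j k : ℂ) * (Polynomial.derivative (Φ j)).eval z *
      (Polynomial.derivative (Φ k)).eval z
  - ∑ j, ∫ x, ((Polynomial.derivative (Φ j)).eval x - (Polynomial.derivative (Φ j)).eval z)
      / (x - z) ∂(μ j)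

section Helpers

lemma measure_compl_msupport (μ : Measure ℂ) : μ (msupport μ)ᶜ = 0 := by
  set S : Set (Set ℂ) := {s : Set ℂ | IsOpen s ∧ μ s = 0} with hS
  obtain ⟨T, hTc, hTS, hTU⟩ := TopologicalSpace.isOpen_sUnion_countable S (fun s hs => hs.1)
  have hsub : (msupport μ)ᶜ ⊆ ⋃₀ T := by
    rw [hTU]
    intro x hx
    simp only [msupport, Set.mem_compl_iff, Set.mem_setOf_eq, not_forall] at hx
    obtain ⟨U, hU, hxU, hμU⟩ := hx
    exact ⟨U, ⟨hU, not_not.mp hμU⟩, hxU⟩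
  refine measure_mono_null hsub ?_
  exact (measure_sUnion_null_iff hTc).mpr (fun s hs => (hTS hs).2)

lemma log_est {w : ℂ} (hw : ‖w‖ ≤ 1/2) : |Real.log ‖1 + w‖ - w.re| ≤ ‖w‖^2 := by
  have h1 : ‖w‖ < 1 := lt_of_le_of_lt hw (by norm_num)
  have hpos : (0:ℝ) < 1 - ‖w‖ := by linarith
  have hre : Real.log ‖1 + w‖ = (Complex.log (1 + w)).re := by
    rw [Complex.log_re]
  calc |Real.log ‖1 + w‖ - w.re| = |(Complex.log (1 + w) - w).re| := by
        rw [hre, Complex.sub_re]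
    _ ≤ ‖Complex.log (1 + w) - w‖ := Complex.abs_re_le_norm _
    _ ≤ ‖w‖^2 * (1 - ‖w‖)⁻¹ / 2 := Complex.norm_log_one_add_sub_self_le h1
    _ ≤ ‖w‖^2 := by
        have h2 : (1 - ‖w‖)⁻¹ ≤ 2 := by
          rw [inv_le_iff_one_le_mul₀ hpos]; linarith
        have := sq_nonneg ‖w‖
        nlinarith

lemma poly_lip (P : Polynomial ℂ) (R : ℝ) :
    ∃ L, 0 ≤ L ∧ ∀ a b : ℂ, ‖a‖ ≤ R → ‖b‖ ≤ R → ‖P.eval a - P.eval b‖ ≤ L * ‖a - b‖ := by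
  obtain ⟨C, hC⟩ := (isCompact_closedBall (0:ℂ) R).exists_bound_of_continuousOn
    ((P.derivative.continuous).continuousOn)
  refine ⟨max C 0, le_max_right _ _, fun a b ha hb => ?_⟩
  have := Convex.norm_image_sub_le_of_norm_hasDerivWithin_le
    (f := fun y => P.eval y) (f' := fun y => P.derivative.eval y)
    (s := Metric.closedBall (0:ℂ) R) (C := max C 0)
    (fun x _ => (P.hasDerivAt x).hasDerivWithinAt)
    (fun x hx => le_trans (by simpa using hC x hx) (le_max_left _ _))
    (convex_closedBall _ _) (by simpa using hb) (by simpa using ha)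
  simpa using this

lemma poly_quad (P : Polynomial ℂ) (R : ℝ) :
    ∃ C, 0 ≤ C ∧ ∀ z w : ℂ, ‖z‖ ≤ R → ‖w‖ ≤ 1 →
      ‖P.eval (z + w) - P.eval z - (Polynomial.derivative P).eval z * w‖ ≤ C * ‖w‖^2 := by
  obtain ⟨L, hL0, hL⟩ := poly_lip (Polynomial.derivative P) (|R| + 1)
  refine ⟨L, hL0, fun z w hz hw => ?_⟩
  have hzR : ‖z‖ ≤ |R| + 1 := le_trans hz (by linarith [le_abs_self R])
  have hzwR : ‖z + w‖ ≤ |R| + 1 := le_trans (norm_add_le _ _) (by linarith [le_abs_self R])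
  have hseg : segment ℝ z (z + w) ⊆ Metric.closedBall (0:ℂ) (|R| + 1) :=
    (convex_closedBall _ _).segment_subset (by simpa using hzR) (by simpa using hzwR)
  have key := Convex.norm_image_sub_le_of_norm_hasDerivWithin_le
    (f := fun y => P.eval y - (Polynomial.derivative P).eval z * y)
    (f' := fun y => (Polynomial.derivative P).eval y - (Polynomial.derivative P).eval z)
    (s := segment ℝ z (z + w)) (C := L * ‖w‖)
    (fun x _ => ((P.hasDerivAt x).sub (((hasDerivAt_id x).const_mul
        ((Polynomial.derivative P).eval z)).congr_deriv (mul_one _))).hasDerivWithinAt)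
    (fun x hx => by
      have h1 : ‖x - z‖ ≤ ‖w‖ := by
        have := dist_add_dist_of_mem_segment hx
        have h2 : dist z x ≤ dist z (z + w) := by linarith [dist_nonneg (x := x) (y := z + w)]
        simpa [dist_eq_norm, norm_sub_rev] using h2
      have h3 : ‖x‖ ≤ |R| + 1 := by simpa using hseg hx
      calc ‖(Polynomial.derivative P).eval x - (Polynomial.derivative P).eval z‖
          ≤ L * ‖x - z‖ := hL x z h3 hzR
        _ ≤ L * ‖w‖ := by nlinarith)
    (convex_segment _ _) (left_mem_segment ℝ _ _) (right_mem_segment ℝ _ _)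
  have hkey : ‖(P.eval (z + w) - (Polynomial.derivative P).eval z * (z + w)) -
      (P.eval z - (Polynomial.derivative P).eval z * z)‖ ≤ L * ‖w‖ * ‖(z + w) - z‖ := key
  calc ‖P.eval (z + w) - P.eval z - (Polynomial.derivative P).eval z * w‖
      = ‖(P.eval (z + w) - (Polynomial.derivative P).eval z * (z + w)) -
      (P.eval z - (Polynomial.derivative P).eval z * z)‖ := by ring_nf
    _ ≤ L * ‖w‖ * ‖(z + w) - z‖ := hkey
    _ = L * ‖w‖^2 := by rw [add_sub_cancel_left]; ring

end Helpers

set_option maxHeartbeats 1600000 in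
theorem energy_expansion (α : ℝ) (hα : α ∈ Set.Icc (0 : ℝ) 1)
    (Φ : Fin 3 → Polynomial ℂ)
    (hΦ : Polynomial.derivative (Φ 0) - Polynomial.derivative (Φ 1) =
      Polynomial.derivative (Φ 2))
    (μ : Fin 3 → Measure ℂ) (hμ : InClassM α Φ μ)
    (h : ℂ → ℂ) (hh : ContDiff ℝ 2 h) :
    ∃ C : ℝ, 0 < C ∧ ∃ δ : ℝ, 0 < δ ∧ ∀ t : ℝ, |t| < δ →
      |energyE Φ (fun j => pushMeas h t (μ j)) - energyE Φ μ - t * (Dvar Φ μ h).re|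
        ≤ C * t ^ 2 := by
  classical
  -- Basic setup: supports
  have hae : ∀ j, ∀ᵐ x ∂(μ j), x ∈ msupport (μ j) := by
    intro j
    rw [MeasureTheory.ae_iff]
    have : {x : ℂ | ¬ x ∈ msupport (μ j)} = (msupport (μ j))ᶜ := rfl
    rw [this]
    exact measure_compl_msupport (μ j)
  -- a radius containing all supports
  choose r hr using fun j => (hμ.compactSupp j).isBounded.subset_closedBall (0:ℂ)
  set R : ℝ := |r 0| + |r 1| + |r 2| with hRdef
  have hR0 : 0 ≤ R := by positivity
  have hR : ∀ j, msupport (μ j) ⊆ Metric.closedBall (0:ℂ) R := by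
    intro j
    refine (hr j).trans (Metric.closedBall_subset_closedBall ?_)
    fin_cases j <;> simp [hRdef] <;> [skip; skip; skip] <;>
      nlinarith [le_abs_self (r 0), le_abs_self (r 1), le_abs_self (r 2),
        abs_nonneg (r 0), abs_nonneg (r 1), abs_nonneg (r 2)]
  set B : Set ℂ := Metric.closedBall (0:ℂ) R with hBdef
  -- bound and Lipschitz constant for h on B
  obtain ⟨M₀, hM₀⟩ := (isCompact_closedBall (0:ℂ) R).exists_bound_of_continuousOn
    hh.continuous.continuousOn
  set M : ℝ := max M₀ 0 with hMdef
  have hM0 : 0 ≤ M := le_max_right _ _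
  have hM : ∀ x ∈ B, ‖h x‖ ≤ M := fun x hx => le_trans (hM₀ x hx) (le_max_left _ _)
  obtain ⟨L₀, hL₀⟩ := (isCompact_closedBall (0:ℂ) R).exists_bound_of_continuousOn
    (hh.continuous_fderiv two_ne_zero).continuousOn
  set L : ℝ := max L₀ 0 with hLdef
  have hL0 : 0 ≤ L := le_max_right _ _
  have hLip : ∀ x ∈ B, ∀ y ∈ B, ‖h x - h y‖ ≤ L * ‖x - y‖ := by
    intro x hx y hy
    exact Convex.norm_image_sub_le_of_norm_fderiv_le
      (fun z _ => (hh.differentiable two_ne_zero).differentiableAt)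
      (fun z hz => le_trans (hL₀ z hz) (le_max_left _ _)) (convex_closedBall _ _) hy hx
  -- the function u
  set u : ℂ × ℂ → ℂ := fun p => (h p.1 - h p.2) / (p.1 - p.2) with hudef
  have hu_bound : ∀ x ∈ B, ∀ y ∈ B, ‖u (x, y)‖ ≤ L := by
    intro x hx y hy
    by_cases hxy : x = y
    · simp [hudef, hxy, hL0]
    · have hxy0 : x - y ≠ 0 := sub_ne_zero.mpr hxy
      have : ‖u (x, y)‖ = ‖h x - h y‖ / ‖x - y‖ := by rw [hudef]; simp [norm_div]
      rw [this, div_le_iff₀ (norm_pos_iff.mpr hxy0)]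
      exact hLip x hx y hy
  -- measurability facts
  have hTcont : ∀ t : ℝ, Continuous (fun z : ℂ => z + (t:ℂ) * h z) :=
    fun t => continuous_id.add (continuous_const.mul hh.continuous)
  have humeas : Measurable u := by
    rw [hudef]
    exact ((hh.continuous.measurable.comp measurable_fst).sub
      (hh.continuous.measurable.comp measurable_snd)).div (measurable_fst.sub measurable_snd)
  have hfmeas : Measurable (fun p : ℂ × ℂ => Real.log (1/‖p.1 - p.2‖)) :=
    Real.measurable_log.comp (measurable_const.div (measurable_fst.sub measurable_snd).norm)
  -- a.e. membership in products
  have haeP : ∀ j k, ∀ᵐ p ∂((μ j).prod (μ k)), p.1 ∈ msupport (μ j) ∧ p.2 ∈ msupport (μ k) := by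
    intro j k
    haveI := hμ.finite j; haveI := hμ.finite k
    have h1 : ((μ j).prod (μ k)) ((msupport (μ j) ×ˢ msupport (μ k))ᶜ) = 0 := by
      have hsub : (msupport (μ j) ×ˢ msupport (μ k))ᶜ ⊆
          ((msupport (μ j))ᶜ ×ˢ (Set.univ : Set ℂ)) ∪
          ((Set.univ : Set ℂ) ×ˢ (msupport (μ k))ᶜ) := by
        intro p hp
        simp only [Set.mem_compl_iff, Set.mem_prod, Set.mem_union, Set.mem_univ, and_true,
          true_and, not_and_or] at *
        tauto
      refine measure_mono_null hsub (le_antisymm ?_ zero_le)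
      refine le_trans (measure_union_le _ _) ?_
      rw [Measure.prod_prod, Measure.prod_prod, measure_compl_msupport, measure_compl_msupport]
      simp
    rw [MeasureTheory.ae_iff]
    refine measure_mono_null ?_ h1
    intro p hp
    simp only [Set.mem_setOf_eq, Set.mem_compl_iff, Set.mem_prod] at *
    tauto
  -- integrability of u on products
  have hint_u : ∀ j k, Integrable u ((μ j).prod (μ k)) := by
    intro j k
    haveI := hμ.finite j; haveI := hμ.finite k
    refine (integrable_const L).mono' humeas.aestronglyMeasurable ?_
    filter_upwards [haeP j k] with p hp
    simpa using hu_bound p.1 (hR j hp.1) p.2 (hR k hp.2)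
  -- quadratic Taylor constants for the fields
  choose Cq hCq0 hCq using fun j => poly_quad (Φ j) R
  -- bounds for Φ' · h on B
  have hWex : ∀ j, ∃ W, 0 ≤ W ∧ ∀ x ∈ B, ‖(Polynomial.derivative (Φ j)).eval x * h x‖ ≤ W := by
    intro j
    obtain ⟨W₀, hW₀⟩ := (isCompact_closedBall (0:ℂ) R).exists_bound_of_continuousOn
      (((Φ j).derivative.continuous).mul hh.continuous).continuousOn
    exact ⟨max W₀ 0, le_max_right _ _, fun x hx => le_trans (hW₀ x hx) (le_max_left _ _)⟩
  choose W hW0 hWb using hWex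
  have hint_W : ∀ j, Integrable (fun x => (Polynomial.derivative (Φ j)).eval x * h x) (μ j) := by
    intro j
    haveI := hμ.finite j
    refine (integrable_const (W j)).mono'
      (((Φ j).derivative.continuous.mul hh.continuous).measurable.aestronglyMeasurable) ?_
    filter_upwards [hae j] with x hx
    exact hWb j x (hR j hx)
  -- δ
  set δ : ℝ := min ((2*(L+1))⁻¹) ((M+1)⁻¹) with hδdef
  have hδpos : 0 < δ := lt_min (by positivity) (by positivity)
  -- pointwise log estimate
  have keylog : ∀ t : ℝ, |t| ≤ δ → ∀ x ∈ B, ∀ y ∈ B,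
      |Real.log (1/‖(x + (t:ℂ) * h x) - (y + (t:ℂ) * h y)‖) - Real.log (1/‖x - y‖)
        + t * (u (x, y)).re| ≤ (L+1)^2 * t^2 := by
    intro t ht x hx y hy
    by_cases hxy : x = y
    · subst hxy
      have : u (x, x) = 0 := by simp [hudef]
      simp only [this, Complex.zero_re, mul_zero, add_zero, sub_self, norm_zero]
      simp only [div_zero, Real.log_zero, sub_zero, abs_zero]
      positivity
    · have hxy0 : x - y ≠ 0 := sub_ne_zero.mpr hxy
      have htL : |t| ≤ (2*(L+1))⁻¹ := le_trans ht (min_le_left _ _)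
      set w : ℂ := (t:ℂ) * u (x, y) with hwdef
      have hub : ‖u (x, y)‖ ≤ L := hu_bound x hx y hy
      have hwnorm : ‖w‖ ≤ 1/2 := by
        rw [hwdef, norm_mul, Complex.norm_real, Real.norm_eq_abs]
        have h1 : (2*(L+1))⁻¹ * L ≤ 1/2 := by
          rw [inv_mul_le_iff₀ (by positivity)]
          nlinarith
        nlinarith [abs_nonneg t, norm_nonneg (u (x, y))]
      have hfact : (x + (t:ℂ) * h x) - (y + (t:ℂ) * h y) = (x - y) * (1 + w) := by
        rw [hwdef, hudef]
        field_simp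
        ring
      have h1wpos : (0:ℝ) < ‖1 + w‖ := by
        have h2 : ‖(1:ℂ)‖ ≤ ‖1 + w‖ + ‖w‖ := by
          calc ‖(1:ℂ)‖ = ‖(1 + w) - w‖ := by ring_nf
            _ ≤ ‖1 + w‖ + ‖w‖ := norm_sub_le _ _
        simp only [norm_one] at h2
        linarith
      have hlog1 : Real.log (1/‖(x + (t:ℂ) * h x) - (y + (t:ℂ) * h y)‖)
          = - Real.log ‖x - y‖ - Real.log ‖1 + w‖ := by
        rw [hfact, one_div, Real.log_inv, norm_mul,
          Real.log_mul (norm_ne_zero_iff.mpr hxy0) (ne_of_gt h1wpos)]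
        ring
      have hlog2 : Real.log (1/‖x - y‖) = - Real.log ‖x - y‖ := by
        rw [one_div, Real.log_inv]
      have hwre : w.re = t * (u (x, y)).re := by
        rw [hwdef, Complex.re_ofReal_mul]
      rw [hlog1, hlog2]
      have heq : - Real.log ‖x - y‖ - Real.log ‖1 + w‖ - (- Real.log ‖x - y‖)
          + t * (u (x, y)).re = -(Real.log ‖1 + w‖ - w.re) := by
        rw [hwre]; ring
      rw [heq, abs_neg]
      refine le_trans (log_est hwnorm) ?_
      have hw2 : ‖w‖^2 ≤ L^2 * t^2 := by
        rw [hwdef, norm_mul, Complex.norm_real, Real.norm_eq_abs]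
        have h3 : ‖u (x, y)‖^2 ≤ L^2 := by nlinarith [norm_nonneg (u (x, y))]
        calc (|t| * ‖u (x, y)‖)^2 = t^2 * ‖u (x, y)‖^2 := by
              rw [mul_pow, _root_.sq_abs]
          _ ≤ t^2 * L^2 := mul_le_mul_of_nonneg_left h3 (sq_nonneg t)
          _ = L^2 * t^2 := by ring
      nlinarith [sq_nonneg t, hL0]
  -- pointwise field estimate
  have keyfield : ∀ j, ∀ t : ℝ, |t| ≤ δ → ∀ z ∈ B,
      |((Φ j).eval (z + (t:ℂ) * h z)).re - ((Φ j).eval z).re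
        - t * ((Polynomial.derivative (Φ j)).eval z * h z).re| ≤ (Cq j * M^2) * t^2 := by
    intro j t ht z hz
    set w : ℂ := (t:ℂ) * h z with hwdef
    have htM : |t| ≤ (M+1)⁻¹ := le_trans ht (min_le_right _ _)
    have hwM : ‖w‖ ≤ |t| * M := by
      rw [hwdef, norm_mul, Complex.norm_real, Real.norm_eq_abs]
      nlinarith [abs_nonneg t, hM z hz]
    have hw1 : ‖w‖ ≤ 1 := by
      have : (M+1)⁻¹ * M ≤ 1 := by
        rw [inv_mul_le_iff₀ (by positivity)]; nlinarith
      nlinarith [abs_nonneg t, hM0]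
    have hzR : ‖z‖ ≤ R := by simpa [hBdef] using hz
    have hq := hCq j z w hzR hw1
    have hre : ((Φ j).eval (z + w)).re - ((Φ j).eval z).re
        - t * ((Polynomial.derivative (Φ j)).eval z * h z).re
        = ((Φ j).eval (z + w) - (Φ j).eval z - (Polynomial.derivative (Φ j)).eval z * w).re := by
      have hw2 : (Polynomial.derivative (Φ j)).eval z * w
          = (t:ℂ) * ((Polynomial.derivative (Φ j)).eval z * h z) := by rw [hwdef]; ring
      rw [Complex.sub_re, Complex.sub_re, hw2, Complex.re_ofReal_mul]
    rw [hre]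
    refine le_trans (Complex.abs_re_le_norm _) (le_trans hq ?_)
    have : ‖w‖^2 ≤ t^2 * M^2 := by nlinarith [norm_nonneg w, abs_nonneg t, _root_.sq_abs t]
    nlinarith [hCq0 j]
  -- per-pair integral bound for the logarithmic part
  have pairbound : ∀ j k, ∀ t : ℝ, |t| ≤ δ →
      |logEnergy (pushMeas h t (μ j)) (pushMeas h t (μ k)) - logEnergy (μ j) (μ k)
        + t * (∫ p, u p ∂((μ j).prod (μ k))).re|
      ≤ ((L+1)^2 * (((μ j).prod (μ k)) Set.univ).toReal) * t^2 := by
    intro j k t ht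
    haveI := hμ.finite j; haveI := hμ.finite k
    set T : ℂ → ℂ := fun z => z + (t:ℂ) * h z with hTdef
    have hTc : Continuous T := hTcont t
    set P : Measure (ℂ × ℂ) := (μ j).prod (μ k) with hPdef
    -- the error function g
    set g : ℂ × ℂ → ℝ := fun p => Real.log (1/‖T p.1 - T p.2‖) - Real.log (1/‖p.1 - p.2‖)
        + t * (u p).re with hgdef
    have hfTmeas : Measurable (fun p : ℂ × ℂ => Real.log (1/‖T p.1 - T p.2‖)) :=
      Real.measurable_log.comp (measurable_const.div
        ((hTc.measurable.comp measurable_fst).sub (hTc.measurable.comp measurable_snd)).norm)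
    have hgmeas : Measurable g := by
      rw [hgdef]
      exact (hfTmeas.sub hfmeas).add
        (measurable_const.mul (Complex.measurable_re.comp humeas))
    have hgbound : ∀ᵐ p ∂P, ‖g p‖ ≤ (L+1)^2 * t^2 := by
      filter_upwards [haeP j k] with p hp
      rw [Real.norm_eq_abs]
      have := keylog t ht p.1 (hR j hp.1) p.2 (hR k hp.2)
      simpa [hgdef, hTdef] using this
    have hgint : Integrable g P :=
      (integrable_const _).mono' hgmeas.aestronglyMeasurable hgbound
    have hureint : Integrable (fun p => (u p).re) P := by
      have h1 := (hint_u j k).re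
      simpa [RCLike.re_to_complex] using h1
    have hfint : Integrable (fun p : ℂ × ℂ => Real.log (1/‖p.1 - p.2‖)) P := hμ.energyInt j k
    have hfTint : Integrable (fun p : ℂ × ℂ => Real.log (1/‖T p.1 - T p.2‖)) P := by
      have hident : (fun p : ℂ × ℂ => Real.log (1/‖T p.1 - T p.2‖))
          = fun p => Real.log (1/‖p.1 - p.2‖) + (g p - t * (u p).re) := by
        funext p; rw [hgdef]; ring
      rw [hident]
      exact hfint.add (hgint.sub (hureint.const_mul t))
    -- pushforward identity
    have hpush : logEnergy (pushMeas h t (μ j)) (pushMeas h t (μ k))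
        = ∫ p, Real.log (1/‖T p.1 - T p.2‖) ∂P := by
      have hsm : StronglyMeasurable
          (fun x => ∫ y, Real.log (1/‖x - y‖) ∂(Measure.map T (μ k))) :=
        hfmeas.stronglyMeasurable.integral_prod_right'
      have step1 : logEnergy (pushMeas h t (μ j)) (pushMeas h t (μ k))
          = ∫ x, ∫ y, Real.log (1/‖T x - y‖) ∂(Measure.map T (μ k)) ∂(μ j) := by
        simp only [logEnergy, pushMeas]
        exact integral_map hTc.measurable.aemeasurable hsm.aestronglyMeasurable
      rw [step1]
      have step2 : ∀ x : ℂ, ∫ y, Real.log (1/‖T x - y‖) ∂(Measure.map T (μ k))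
          = ∫ y, Real.log (1/‖T x - T y‖) ∂(μ k) := by
        intro x
        exact integral_map hTc.measurable.aemeasurable
          (Real.measurable_log.comp
            (measurable_const.div (measurable_const.sub measurable_id).norm)).aestronglyMeasurable
      simp_rw [step2]
      exact integral_integral hfTint
    have hbase : logEnergy (μ j) (μ k) = ∫ p, Real.log (1/‖p.1 - p.2‖) ∂P := by
      simp only [logEnergy]
      exact integral_integral hfint
    have hsplit2 : ∫ p, Real.log (1/‖T p.1 - T p.2‖) ∂P
        = (∫ p, Real.log (1/‖p.1 - p.2‖) ∂P)
          + ((∫ p, g p ∂P) - t * ∫ p, (u p).re ∂P) := by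
      have hident : (fun p : ℂ × ℂ => Real.log (1/‖T p.1 - T p.2‖))
          = fun p => Real.log (1/‖p.1 - p.2‖) + (g p - t * (u p).re) := by
        funext p; rw [hgdef]; ring
      have hg2 : Integrable (fun p => g p - t * (u p).re) P := hgint.sub (hureint.const_mul t)
      have hg3 : Integrable (fun p => t * (u p).re) P := hureint.const_mul t
      rw [hident, integral_add hfint hg2, integral_sub hgint hg3, integral_const_mul]
    have hVre : (∫ p, u p ∂P).re = ∫ p, (u p).re ∂P := by
      simpa [RCLike.re_to_complex] using (integral_re (hint_u j k)).symm
    rw [hpush, hbase, hsplit2, hVre]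
    have hfin : |∫ p, g p ∂P| ≤ ((L+1)^2 * t^2) * (P Set.univ).toReal := by
      rw [← Real.norm_eq_abs]
      exact norm_integral_le_of_norm_le_const hgbound
    calc |∫ p, Real.log (1/‖p.1 - p.2‖) ∂P + ((∫ p, g p ∂P) - t * ∫ p, (u p).re ∂P)
          - ∫ p, Real.log (1/‖p.1 - p.2‖) ∂P + t * ∫ p, (u p).re ∂P|
        = |∫ p, g p ∂P| := by congr 1; ring
      _ ≤ ((L+1)^2 * t^2) * (P Set.univ).toReal := hfin
      _ = ((L+1)^2 * (P Set.univ).toReal) * t^2 := by ring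

  -- per-index field bound
  have fieldbound : ∀ j, ∀ t : ℝ, |t| ≤ δ →
      |(∫ x, ((Φ j).eval x).re ∂(pushMeas h t (μ j))) - (∫ x, ((Φ j).eval x).re ∂(μ j))
        - t * (∫ x, (Polynomial.derivative (Φ j)).eval x * h x ∂(μ j)).re|
      ≤ (Cq j * M^2 * ((μ j) Set.univ).toReal) * t^2 := by
    intro j t ht
    haveI := hμ.finite j
    set T : ℂ → ℂ := fun z => z + (t:ℂ) * h z with hTdef
    have hTc : Continuous T := hTcont t
    have hpushf : (∫ x, ((Φ j).eval x).re ∂(pushMeas h t (μ j)))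
        = ∫ z, ((Φ j).eval (T z)).re ∂(μ j) := by
      simp only [pushMeas]
      exact integral_map hTc.measurable.aemeasurable
        (Complex.continuous_re.comp ((Φ j).continuous)).aestronglyMeasurable
    set rr : ℂ → ℝ := fun z => ((Φ j).eval (T z)).re - ((Φ j).eval z).re
        - t * ((Polynomial.derivative (Φ j)).eval z * h z).re with hrdef
    have hrcont : Continuous rr := by
      rw [hrdef]
      exact ((Complex.continuous_re.comp ((Φ j).continuous.comp hTc)).sub
        (Complex.continuous_re.comp (Φ j).continuous)).sub
        (continuous_const.mul (Complex.continuous_re.comp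
          (((Φ j).derivative.continuous).mul hh.continuous)))
    have hrbound : ∀ᵐ z ∂(μ j), ‖rr z‖ ≤ (Cq j * M^2) * t^2 := by
      filter_upwards [hae j] with z hz
      rw [Real.norm_eq_abs]
      exact keyfield j t ht z (hR j hz)
    have hrint : Integrable rr (μ j) :=
      (integrable_const _).mono' hrcont.measurable.aestronglyMeasurable hrbound
    have hWre : Integrable (fun z => ((Polynomial.derivative (Φ j)).eval z * h z).re) (μ j) := by
      have h1 := (hint_W j).re
      simpa [RCLike.re_to_complex] using h1
    have hIre : (∫ x, (Polynomial.derivative (Φ j)).eval x * h x ∂(μ j)).re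
        = ∫ x, ((Polynomial.derivative (Φ j)).eval x * h x).re ∂(μ j) := by
      simpa [RCLike.re_to_complex] using (integral_re (hint_W j)).symm
    have hident : (fun z => ((Φ j).eval (T z)).re) = fun z => ((Φ j).eval z).re
        + (t * ((Polynomial.derivative (Φ j)).eval z * h z).re + rr z) := by
      funext z; rw [hrdef]; ring
    have hintsum : ∫ z, ((Φ j).eval (T z)).re ∂(μ j)
        = (∫ z, ((Φ j).eval z).re ∂(μ j))
          + (t * ∫ z, ((Polynomial.derivative (Φ j)).eval z * h z).re ∂(μ j)
            + ∫ z, rr z ∂(μ j)) := by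
      have hg2 : Integrable (fun z => t * ((Polynomial.derivative (Φ j)).eval z * h z).re
          + rr z) (μ j) := (hWre.const_mul t).add hrint
      have hg3 : Integrable (fun z => t * ((Polynomial.derivative (Φ j)).eval z * h z).re)
          (μ j) := hWre.const_mul t
      rw [hident, integral_add (hμ.fieldInt j) hg2, integral_add hg3 hrint, integral_const_mul]
    rw [hpushf, hintsum, hIre]
    have hfin : |∫ z, rr z ∂(μ j)| ≤ ((Cq j * M^2) * t^2) * ((μ j) Set.univ).toReal := by
      rw [← Real.norm_eq_abs]
      exact norm_integral_le_of_norm_le_const hrbound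
    calc |∫ z, ((Φ j).eval z).re ∂(μ j)
          + (t * ∫ z, ((Polynomial.derivative (Φ j)).eval z * h z).re ∂(μ j) + ∫ z, rr z ∂(μ j))
          - ∫ z, ((Φ j).eval z).re ∂(μ j)
          - t * ∫ x, ((Polynomial.derivative (Φ j)).eval x * h x).re ∂(μ j)|
        = |∫ z, rr z ∂(μ j)| := by congr 1; ring
      _ ≤ ((Cq j * M^2) * t^2) * ((μ j) Set.univ).toReal := hfin
      _ = (Cq j * M^2 * ((μ j) Set.univ).toReal) * t^2 := by ring

  -- real part of Dvar
  have hDre : (Dvar Φ μ h).re =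
      -(∑ j, ∑ k, interA j k * (∫ p, u p ∂((μ j).prod (μ k))).re)
        + ∑ j, (∫ x, (Polynomial.derivative (Φ j)).eval x * h x ∂(μ j)).re := by
    have hiter : ∀ j k, (∫ x, ∫ y, (h x - h y)/(x - y) ∂(μ k) ∂(μ j))
        = ∫ p, u p ∂((μ j).prod (μ k)) := by
      intro j k
      haveI := hμ.finite j; haveI := hμ.finite k
      exact integral_integral (hint_u j k)
    have h1 : ∀ j, (∑ k, (interA j k : ℂ)
        * ∫ x, ∫ y, (h x - h y)/(x - y) ∂(μ k) ∂(μ j)).re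
        = ∑ k, interA j k * (∫ p, u p ∂((μ j).prod (μ k))).re := by
      intro j
      rw [Complex.re_sum]
      exact Finset.sum_congr rfl fun k _ => by rw [hiter j k, Complex.re_ofReal_mul]
    simp only [Dvar, Complex.add_re, Complex.neg_re, Complex.re_sum]
    congr 1
    congr 1
    exact Finset.sum_congr rfl fun j _ => h1 j

  -- assemble
  set S1 : ℝ := ∑ j, ∑ k, |interA j k| * ((L+1)^2 * (((μ j).prod (μ k)) Set.univ).toReal)
    with hS1def
  set S2 : ℝ := ∑ j, Cq j * M^2 * ((μ j) Set.univ).toReal with hS2def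
  have hS1 : 0 ≤ S1 := by
    refine Finset.sum_nonneg fun j _ => Finset.sum_nonneg fun k _ => ?_
    positivity
  have hS2 : 0 ≤ S2 := by
    refine Finset.sum_nonneg fun j _ => ?_
    have := hCq0 j
    positivity
  refine ⟨S1 + S2 + 1, by linarith, δ, hδpos, ?_⟩
  intro t ht
  have ht' : |t| ≤ δ := le_of_lt ht
  have hsplit : energyE Φ (fun j => pushMeas h t (μ j)) - energyE Φ μ - t * (Dvar Φ μ h).re
      = (∑ j, ∑ k, interA j k *
          (logEnergy (pushMeas h t (μ j)) (pushMeas h t (μ k)) - logEnergy (μ j) (μ k)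
            + t * (∫ p, u p ∂((μ j).prod (μ k))).re))
        + ∑ j, ((∫ x, ((Φ j).eval x).re ∂(pushMeas h t (μ j)))
            - (∫ x, ((Φ j).eval x).re ∂(μ j))
            - t * (∫ x, (Polynomial.derivative (Φ j)).eval x * h x ∂(μ j)).re) := by
    rw [hDre]
    simp only [energyE, Fin.sum_univ_three]
    ring
  rw [hsplit]
  have A1 : |∑ j, ∑ k, interA j k *
      (logEnergy (pushMeas h t (μ j)) (pushMeas h t (μ k)) - logEnergy (μ j) (μ k)
        + t * (∫ p, u p ∂((μ j).prod (μ k))).re)| ≤ S1 * t^2 := by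
    rw [hS1def, Finset.sum_mul]
    refine le_trans (Finset.abs_sum_le_sum_abs _ _) (Finset.sum_le_sum fun j _ => ?_)
    rw [Finset.sum_mul]
    refine le_trans (Finset.abs_sum_le_sum_abs _ _) (Finset.sum_le_sum fun k _ => ?_)
    rw [abs_mul, mul_assoc]
    exact mul_le_mul_of_nonneg_left (pairbound j k t ht') (abs_nonneg _)
  have A2 : |∑ j, ((∫ x, ((Φ j).eval x).re ∂(pushMeas h t (μ j)))
      - (∫ x, ((Φ j).eval x).re ∂(μ j))
      - t * (∫ x, (Polynomial.derivative (Φ j)).eval x * h x ∂(μ j)).re)| ≤ S2 * t^2 := by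
    rw [hS2def, Finset.sum_mul]
    exact le_trans (Finset.abs_sum_le_sum_abs _ _)
      (Finset.sum_le_sum fun j _ => fieldbound j t ht')
  refine le_trans (abs_add_le _ _) ?_
  have := sq_nonneg t
  nlinarith
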